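/- Let G be a simple d-regular graph (d ≥ 1) on a finite vertex set V of size n ≥ 1, let κ ∈ (0,1] be real, and suppose that for every subset S ⊆ V the number e(S, V∖S) of edges of G with exactly one endpoint in S satisfies e(S, V∖S) ≥ κ·d·|S|·(n−|S|)/n. Then for any two independent sets I₁, I₂ of G, writing a = |V∖(I₁ ∪ I₂)|, b = |I₁ ∩ I₂| and m = a + b, one has a − b ≥ κ·m·(n−m)/n. -/

import Mathlib

open Finset

/-- Number of edges of `G` with exactly one endpoint in `S` (counted via the
orientation whose first coordinate lies in `S`). -/
def crossCount {V : Type*} [Fintype V] [DecidableEq V] (G : SimpleGraph V)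
    [DecidableRel G.Adj] (S : Finset V) : ℕ :=
  (Finset.univ.filter (fun p : V × V => G.Adj p.1 p.2 ∧ p.1 ∈ S ∧ p.2 ∉ S)).card

lemma card_adj_fst {V : Type*} [Fintype V] [DecidableEq V] (G : SimpleGraph V)
    [DecidableRel G.Adj] (d : ℕ) (hreg : G.IsRegularOfDegree d) (T : Finset V) :
    ((Finset.univ : Finset (V × V)).filter
      (fun p => G.Adj p.1 p.2 ∧ p.1 ∈ T)).card = d * T.card := by
  classical
  rw [Finset.card_eq_sum_card_fiberwise (f := Prod.fst) (t := T)
    (fun p hp => (Finset.mem_filter.mp hp).2.2)]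
  have h1 : ∀ v ∈ T,
      (((Finset.univ : Finset (V × V)).filter
        (fun p => G.Adj p.1 p.2 ∧ p.1 ∈ T)).filter (fun p => p.1 = v)).card = d := by
    intro v hv
    have heq : (((Finset.univ : Finset (V × V)).filter
        (fun p => G.Adj p.1 p.2 ∧ p.1 ∈ T)).filter (fun p => p.1 = v))
        = (G.neighborFinset v).map ⟨fun w => (v, w), fun a b h => (Prod.ext_iff.mp h).2⟩ := by
      ext ⟨x, y⟩
      simp only [Finset.mem_filter, Finset.mem_univ, true_and, Finset.mem_map,
        SimpleGraph.mem_neighborFinset, Function.Embedding.coeFn_mk, Prod.mk.injEq]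
      constructor
      · rintro ⟨⟨hadj, hxT⟩, rfl⟩
        exact ⟨y, hadj, rfl⟩
      · rintro ⟨w, hw, rfl, rfl⟩
        exact ⟨⟨hw, hv⟩, rfl⟩
    rw [heq, Finset.card_map]
    exact hreg v
  rw [Finset.sum_congr rfl h1, Finset.sum_const, smul_eq_mul, mul_comm]

lemma card_adj_snd {V : Type*} [Fintype V] [DecidableEq V] (G : SimpleGraph V)
    [DecidableRel G.Adj] (d : ℕ) (hreg : G.IsRegularOfDegree d) (T : Finset V) :
    ((Finset.univ : Finset (V × V)).filter
      (fun p => G.Adj p.1 p.2 ∧ p.2 ∈ T)).card = d * T.card := by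
  classical
  have heq : ((Finset.univ : Finset (V × V)).filter
      (fun p => G.Adj p.1 p.2 ∧ p.2 ∈ T))
      = (((Finset.univ : Finset (V × V)).filter
        (fun p => G.Adj p.1 p.2 ∧ p.1 ∈ T)).map (Equiv.prodComm V V).toEmbedding) := by
    ext ⟨x, y⟩
    simp only [Finset.mem_filter, Finset.mem_univ, true_and, Finset.mem_map,
      Equiv.coe_toEmbedding, Equiv.prodComm_apply, Prod.swap_prod_mk, Prod.mk.injEq]
    constructor
    · rintro ⟨hadj, hyT⟩
      exact ⟨(y, x), ⟨hadj.symm, hyT⟩, rfl⟩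
    · rintro ⟨⟨u, w⟩, ⟨hadj, huT⟩, hsw⟩
      rw [Prod.ext_iff] at hsw
      obtain ⟨h1, h2⟩ := hsw
      simp only [Prod.fst_swap, Prod.snd_swap] at h1 h2
      subst h1; subst h2
      exact ⟨hadj.symm, huT⟩
  rw [heq, Finset.card_map, card_adj_fst G d hreg T]

theorem wt00_minus_wt11_lower_bound
    {V : Type*} [Fintype V] [DecidableEq V]
    (G : SimpleGraph V) [DecidableRel G.Adj]
    (d n : ℕ) (hd : 1 ≤ d) (hreg : G.IsRegularOfDegree d)
    (hn : n = Fintype.card V) (hn1 : 1 ≤ n)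
    (κ : ℝ) (hκ0 : 0 < κ) (hκ1 : κ ≤ 1)
    (hexp : ∀ S : Finset V,
      κ * d * (S.card : ℝ) * ((n : ℝ) - S.card) / n ≤ (crossCount G S : ℝ))
    (I₁ I₂ : Finset V)
    (h₁ : ∀ u ∈ I₁, ∀ v ∈ I₁, ¬ G.Adj u v)
    (h₂ : ∀ u ∈ I₂, ∀ v ∈ I₂, ¬ G.Adj u v)
    (a b m : ℝ)
    (ha : a = (((I₁ ∪ I₂)ᶜ).card : ℝ))
    (hb : b = ((I₁ ∩ I₂).card : ℝ))
    (hm : m = a + b) :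
    κ * m * ((n : ℝ) - m) / n ≤ a - b := by
  classical
  set S : Finset V := (I₁ ∪ I₂)ᶜ ∪ (I₁ ∩ I₂) with hS
  -- card of S
  have hdisjS : Disjoint ((I₁ ∪ I₂)ᶜ) (I₁ ∩ I₂) := by
    rw [Finset.disjoint_left]
    intro x hx hx'
    exact (Finset.mem_compl.mp hx) (Finset.mem_union_left _ (Finset.mem_inter.mp hx').1)
  have hcardS : S.card = ((I₁ ∪ I₂)ᶜ).card + (I₁ ∩ I₂).card :=
    Finset.card_union_of_disjoint hdisjS
  -- neighbors of intersection vertices are in S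
  have hnbr : ∀ x ∈ I₁ ∩ I₂, ∀ y, G.Adj x y → y ∈ S := by
    intro x hx y hxy
    apply Finset.mem_union_left
    rw [Finset.mem_compl, Finset.mem_union]
    push_neg
    obtain ⟨hx1, hx2⟩ := Finset.mem_inter.mp hx
    exact ⟨fun hy => h₁ x hx1 y hy hxy, fun hy => h₂ x hx2 y hy hxy⟩
  -- the "within S" pairs
  set W : Finset (V × V) := (Finset.univ.filter
    (fun p : V × V => G.Adj p.1 p.2 ∧ p.1 ∈ S ∧ p.2 ∈ S)) with hW
  -- split: cross + within = total
  have hsplit : crossCount G S + W.card = d * S.card := by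
    rw [← card_adj_fst G d hreg S]
    have hdisj : Disjoint (Finset.univ.filter
        (fun p : V × V => G.Adj p.1 p.2 ∧ p.1 ∈ S ∧ p.2 ∉ S)) W := by
      rw [Finset.disjoint_left]
      intro p hp hq
      exact (Finset.mem_filter.mp hp).2.2.2 (Finset.mem_filter.mp hq).2.2.2
    have hunion : (Finset.univ.filter
        (fun p : V × V => G.Adj p.1 p.2 ∧ p.1 ∈ S ∧ p.2 ∉ S)) ∪ W
        = Finset.univ.filter (fun p : V × V => G.Adj p.1 p.2 ∧ p.1 ∈ S) := by
      rw [hW, ← Finset.filter_or]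
      apply Finset.filter_congr
      intro p _
      by_cases h : p.2 ∈ S <;> tauto
    rw [crossCount, ← Finset.card_union_of_disjoint hdisj, hunion]
  -- lower bound on W.card
  have hB₁ : (Finset.univ.filter
      (fun p : V × V => G.Adj p.1 p.2 ∧ p.1 ∈ I₁ ∩ I₂)) ⊆ W := by
    intro p hp
    obtain ⟨-, hadj, hmem⟩ := Finset.mem_filter.mp hp
    exact Finset.mem_filter.mpr ⟨Finset.mem_univ _,
      hadj, Finset.mem_union_right _ hmem, hnbr _ hmem _ hadj⟩
  have hB₂ : (Finset.univ.filter
      (fun p : V × V => G.Adj p.1 p.2 ∧ p.2 ∈ I₁ ∩ I₂)) ⊆ W := by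
    intro p hp
    obtain ⟨-, hadj, hmem⟩ := Finset.mem_filter.mp hp
    exact Finset.mem_filter.mpr ⟨Finset.mem_univ _,
      hadj, hnbr _ hmem _ hadj.symm, Finset.mem_union_right _ hmem⟩
  have hBdisj : Disjoint (Finset.univ.filter
      (fun p : V × V => G.Adj p.1 p.2 ∧ p.1 ∈ I₁ ∩ I₂))
      (Finset.univ.filter (fun p : V × V => G.Adj p.1 p.2 ∧ p.2 ∈ I₁ ∩ I₂)) := by
    rw [Finset.disjoint_left]
    intro p hp hq
    obtain ⟨-, hadj, h1⟩ := Finset.mem_filter.mp hp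
    obtain ⟨-, -, h2⟩ := Finset.mem_filter.mp hq
    exact h₁ p.1 (Finset.mem_inter.mp h1).1 p.2 (Finset.mem_inter.mp h2).1 hadj
  have hWlb : d * (I₁ ∩ I₂).card + d * (I₁ ∩ I₂).card ≤ W.card := by
    have h := Finset.card_le_card (Finset.union_subset hB₁ hB₂)
    rwa [Finset.card_union_of_disjoint hBdisj, card_adj_fst G d hreg (I₁ ∩ I₂),
      card_adj_snd G d hreg (I₁ ∩ I₂)] at h
  -- put it together in ℝ
  have hcross : (crossCount G S : ℝ) ≤ d * (a - b) := by
    have h1 : crossCount G S + (d * (I₁ ∩ I₂).card + d * (I₁ ∩ I₂).card)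
        ≤ d * (((I₁ ∪ I₂)ᶜ).card + (I₁ ∩ I₂).card) := by
      rw [← hcardS, ← hsplit]
      exact Nat.add_le_add_left hWlb _
    have h2 := Nat.cast_le (α := ℝ) |>.mpr h1
    push_cast at h2
    rw [ha, hb]
    linarith
  have hmcard : m = (S.card : ℝ) := by
    rw [hm, ha, hb, hcardS]; push_cast; ring
  have hexpS := hexp S
  rw [← hmcard] at hexpS
  have hd' : (0 : ℝ) < d := by exact_mod_cast hd
  have key : κ * d * m * ((n : ℝ) - m) / n ≤ d * (a - b) := le_trans hexpS hcross
  have : d * (κ * m * ((n : ℝ) - m) / n) ≤ d * (a - b) := by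
    calc d * (κ * m * ((n : ℝ) - m) / n) = κ * d * m * ((n : ℝ) - m) / n := by ring
    _ ≤ d * (a - b) := key
  exact le_of_mul_le_mul_left this hd'
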